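/- Let f ∈ P(I), a, b ∈ I with a < b, and suppose f is integrable on [a,b]. Then f((a+b)/2) ≤ (2/(b-a)) ∫_a^b f(x) dx ≤ 2[f(a) + f(b)]. -/

import Mathlib

open MeasureTheory Set Real

/-- `g` is a `P`-function on the set `s`: it is nonnegative on `s` and
`g (t*x + (1-t)*y) ≤ g x + g y` for all `x, y ∈ s` and `t ∈ [0,1]`. -/
def IsPFunctionOn (g : ℝ → ℝ) (s : Set ℝ) : Prop :=
  (∀ x ∈ s, 0 ≤ g x) ∧
    ∀ x ∈ s, ∀ y ∈ s, ∀ t ∈ Set.Icc (0:ℝ) 1, g (t * x + (1 - t) * y) ≤ g x + g y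

theorem stmt_1 (I : Set ℝ) (hI : Convex ℝ I) (f : ℝ → ℝ)
    (hP : IsPFunctionOn f I)
    (a b : ℝ) (ha : a ∈ I) (hb : b ∈ I) (hab : a < b)
    (hint : IntervalIntegrable f MeasureTheory.volume a b) :
    f ((a + b) / 2) ≤ (2 / (b - a)) * ∫ x in a..b, f x ∧
      (2 / (b - a)) * ∫ x in a..b, f x ≤ 2 * (f a + f b) := by
  have hIcc : Set.Icc a b ⊆ I := hI.ordConnected.out ha hb
  have hba : (0:ℝ) < b - a := by linarith
  have habl : a ≤ b := hab.le
  -- integrability of the reflected function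
  have hint' : IntervalIntegrable (fun x => f (a + b - x)) volume a b := by
    have := (hint.comp_sub_left (a + b)).symm
    simpa using this
  constructor
  · -- left inequality
    have key : ∀ x ∈ Set.Icc a b, f ((a + b) / 2) ≤ f x + f (a + b - x) := by
      intro x hx
      have hx' : a + b - x ∈ Set.Icc a b := by
        constructor <;> [linarith [hx.2]; linarith [hx.1]]
      have h := hP.2 x (hIcc hx) (a + b - x) (hIcc hx')
        (1/2) (by constructor <;> norm_num)
      have : (1/2 : ℝ) * x + (1 - 1/2) * (a + b - x) = (a + b) / 2 := by ring
      rwa [this] at h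
    have hmono : (∫ _ in a..b, f ((a + b) / 2)) ≤ ∫ x in a..b, (f x + f (a + b - x)) :=
      intervalIntegral.integral_mono_on habl intervalIntegrable_const (hint.add hint') key
    rw [intervalIntegral.integral_const, intervalIntegral.integral_add hint hint'] at hmono
    have hrefl : (∫ x in a..b, f (a + b - x)) = ∫ x in a..b, f x := by
      have := intervalIntegral.integral_comp_sub_left f (a + b) (a := a) (b := b)
      simpa using this
    rw [hrefl, smul_eq_mul] at hmono
    rw [div_mul_eq_mul_div, le_div_iff₀ hba]
    nlinarith [hmono]
  · -- right inequality
    have key : ∀ x ∈ Set.Icc a b, f x ≤ f a + f b := by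
      intro x hx
      set t := (b - x) / (b - a) with ht
      have ht0 : 0 ≤ t := div_nonneg (by linarith [hx.2]) hba.le
      have ht1 : t ≤ 1 := by
        rw [div_le_one hba]; linarith [hx.1]
      have h := hP.2 a ha b hb t ⟨ht0, ht1⟩
      have hx' : t * a + (1 - t) * b = x := by
        field_simp [ht]
        rw [ht, div_mul_eq_mul_div, one_sub_div hba.ne', div_mul_eq_mul_div, ← add_div, div_eq_iff hba.ne']
        ring
      rwa [hx'] at h
    have hmono : (∫ x in a..b, f x) ≤ ∫ _ in a..b, (f a + f b) :=
      intervalIntegral.integral_mono_on habl hint intervalIntegrable_const key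
    rw [intervalIntegral.integral_const, smul_eq_mul] at hmono
    rw [div_mul_eq_mul_div, div_le_iff₀ hba]
    nlinarith [hmono]
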